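/- For all p > 0 and μ ∈ ℝ, the function y ↦ E(y,p,μ) tends to −∞ as |y| → ∞ and attains its global maximum: there exists ȳ ∈ ℝ such that E(y,p,μ) ≤ E(ȳ,p,μ) for all y ∈ ℝ. -/

import Mathlib

/-- The single-cell partition function `K(y,p,μ)` with cell volume `υ` and ratio `a`. -/
noncomputable def K (υ a y p μ : ℝ) : ℝ :=
  ∑' n : ℕ, (υ ^ n / (Nat.factorial n : ℝ)) *
    Real.exp ((y + μ) * n - (a * p / 2) * (n : ℝ) ^ 2)

/-- The function `E(y,p,μ) = -y²/(2p) + ln K(y,p,μ)`. -/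
noncomputable def E (υ a y p μ : ℝ) : ℝ :=
  -(y ^ 2) / (2 * p) + Real.log (K υ a y p μ)

section aux
variable {υ a p μ : ℝ}

private lemma term_nonneg (hυ : 0 < υ) (y : ℝ) (n : ℕ) :
    0 ≤ (υ ^ n / (Nat.factorial n : ℝ)) *
      Real.exp ((y + μ) * n - (a * p / 2) * (n : ℝ) ^ 2) := by
  positivity

private lemma summable_aux (hυ : 0 < υ) (hap : 0 < a * p) (y : ℝ) :
    Summable (fun n : ℕ => (υ ^ n / (Nat.factorial n : ℝ)) *
      Real.exp ((y + μ) * n - (a * p / 2) * (n : ℝ) ^ 2)) := by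
  have hg : Summable (fun n : ℕ => (υ * Real.exp (y + μ)) ^ n / (Nat.factorial n : ℝ)) :=
    Real.summable_pow_div_factorial _
  refine Summable.of_nonneg_of_le (fun n => term_nonneg hυ y n) (fun n => ?_) hg
  · have h1 : (y + μ) * n - (a * p / 2) * (n : ℝ) ^ 2 ≤ (y + μ) * n := by
      nlinarith [sq_nonneg (n : ℝ)]
    calc (υ ^ n / (Nat.factorial n : ℝ)) * Real.exp ((y + μ) * n - (a * p / 2) * (n : ℝ) ^ 2)
        ≤ (υ ^ n / (Nat.factorial n : ℝ)) * Real.exp ((y + μ) * n) :=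
          mul_le_mul_of_nonneg_left (Real.exp_le_exp.mpr h1) (by positivity)
      _ = (υ * Real.exp (y + μ)) ^ n / (Nat.factorial n : ℝ) := by
          rw [mul_pow, ← Real.exp_nat_mul]; ring_nf

private lemma K_ge_one (hυ : 0 < υ) (hap : 0 < a * p) (y : ℝ) : 1 ≤ K υ a y p μ := by
  have := Summable.le_tsum (summable_aux (μ := μ) hυ hap y) 0 (fun n _ => term_nonneg hυ y n)
  simpa [K] using this

private lemma exp_tsum : (∑' n : ℕ, υ ^ n / (Nat.factorial n : ℝ)) = Real.exp υ := by
  rw [Real.exp_eq_exp_ℝ, NormedSpace.exp_eq_tsum_div]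

private lemma K_le (hυ : 0 < υ) (hap : 0 < a * p) (y : ℝ) :
    K υ a y p μ ≤ Real.exp ((y + μ) ^ 2 / (2 * (a * p))) * Real.exp υ := by
  have hsum : Summable (fun n : ℕ => υ ^ n / (Nat.factorial n : ℝ)) :=
    Real.summable_pow_div_factorial _
  have hle : K υ a y p μ ≤ ∑' n : ℕ, Real.exp ((y + μ) ^ 2 / (2 * (a * p))) *
      (υ ^ n / (Nat.factorial n : ℝ)) := by
    apply Summable.tsum_le_tsum _ (summable_aux hυ hap y) (hsum.mul_left _)
    intro n
    have h1 : (y + μ) * n - (a * p / 2) * (n : ℝ) ^ 2 ≤ (y + μ) ^ 2 / (2 * (a * p)) := by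
      rw [le_div_iff₀ (by positivity)]
      nlinarith [sq_nonneg ((y + μ) - a * p * n)]
    calc (υ ^ n / (Nat.factorial n : ℝ)) * Real.exp ((y + μ) * n - (a * p / 2) * (n : ℝ) ^ 2)
        ≤ (υ ^ n / (Nat.factorial n : ℝ)) * Real.exp ((y + μ) ^ 2 / (2 * (a * p))) :=
          mul_le_mul_of_nonneg_left (Real.exp_le_exp.mpr h1) (by positivity)
      _ = _ := by ring
  rw [tsum_mul_left, exp_tsum] at hle
  exact hle

private lemma K_continuous (hυ : 0 < υ) (hap : 0 < a * p) :
    Continuous (fun y => K υ a y p μ) := by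
  rw [continuous_iff_continuousAt]
  intro y₀
  set R := |y₀| + 1 with hRdef
  have hR : ContinuousOn (fun y => K υ a y p μ) (Metric.ball 0 R) := by
    apply continuousOn_tsum
      (u := fun n : ℕ => (υ * Real.exp (R + |μ|)) ^ n / (Nat.factorial n : ℝ))
    · intro n
      fun_prop
    · exact Real.summable_pow_div_factorial _
    · intro n y hy
      rw [Real.norm_eq_abs, abs_of_nonneg (term_nonneg hυ y n)]
      have hy' : |y| < R := by simpa [Real.norm_eq_abs] using hy
      have h1 : (y + μ) * n - (a * p / 2) * (n : ℝ) ^ 2 ≤ (R + |μ|) * n := by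
        have h2 : (y + μ) * n ≤ (R + |μ|) * n := by
          apply mul_le_mul_of_nonneg_right _ (Nat.cast_nonneg n)
          calc y + μ ≤ |y| + |μ| := add_le_add (le_abs_self y) (le_abs_self μ)
            _ ≤ R + |μ| := by linarith
        nlinarith [sq_nonneg (n : ℝ)]
      calc (υ ^ n / (Nat.factorial n : ℝ)) * Real.exp ((y + μ) * n - (a * p / 2) * (n : ℝ) ^ 2)
          ≤ (υ ^ n / (Nat.factorial n : ℝ)) * Real.exp ((R + |μ|) * n) :=
            mul_le_mul_of_nonneg_left (Real.exp_le_exp.mpr h1) (by positivity)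
        _ = (υ * Real.exp (R + |μ|)) ^ n / (Nat.factorial n : ℝ) := by
            rw [mul_pow, ← Real.exp_nat_mul]; ring_nf
  exact hR.continuousAt (Metric.isOpen_ball.mem_nhds (by
    simp only [Metric.mem_ball, dist_zero_right, Real.norm_eq_abs]
    linarith))

end aux

theorem stmt_8 (υ a : ℝ) (hυ : 0 < υ) (ha : 1 < a) (p μ : ℝ) (hp : 0 < p) :
    Filter.Tendsto (fun y : ℝ => E υ a y p μ) (Filter.cocompact ℝ) Filter.atBot ∧
    ∃ ybar : ℝ, ∀ y : ℝ, E υ a y p μ ≤ E υ a ybar p μ := by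
  have hap : 0 < a * p := by positivity
  -- continuity of E
  have hKpos : ∀ y : ℝ, 0 < K υ a y p μ := fun y => lt_of_lt_of_le one_pos (K_ge_one hυ hap y)
  have hEcont : Continuous (fun y : ℝ => E υ a y p μ) := by
    unfold E
    apply Continuous.add
    · fun_prop
    · exact (K_continuous hυ hap).log (fun y => (hKpos y).ne')
  -- upper bound on E
  have hEle : ∀ y : ℝ, E υ a y p μ ≤
      -(y ^ 2) / (2 * p) + ((y + μ) ^ 2 / (2 * (a * p)) + υ) := by
    intro y
    unfold E
    gcongr
    calc Real.log (K υ a y p μ)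
        ≤ Real.log (Real.exp ((y + μ) ^ 2 / (2 * (a * p))) * Real.exp υ) :=
          Real.log_le_log (hKpos y) (K_le hυ hap y)
      _ = (y + μ) ^ 2 / (2 * (a * p)) + υ := by
          rw [← Real.exp_add, Real.log_exp]
  -- the quadratic upper bound tends to -∞
  set α : ℝ := 1 / (2 * p) - 1 / (2 * (a * p)) with hαdef
  have hα : 0 < α := by
    rw [hαdef, sub_pos]
    apply div_lt_div_of_pos_left one_pos (by positivity)
    nlinarith
  set β : ℝ := |μ| / (a * p) with hβdef
  set γ : ℝ := μ ^ 2 / (2 * (a * p)) + υ with hγdef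
  have hbound : ∀ y : ℝ, E υ a y p μ ≤ |y| * (-α * |y| + β) + γ := by
    intro y
    refine (hEle y).trans ?_
    have h1 : -(y ^ 2) / (2 * p) + ((y + μ) ^ 2 / (2 * (a * p)) + υ)
        = -α * y ^ 2 + (y * μ) / (a * p) + γ := by
      rw [hαdef, hγdef]
      field_simp
      ring
    rw [h1]
    have h2 : (y * μ) / (a * p) ≤ |y| * β := by
      rw [hβdef]
      rw [div_le_iff₀ hap, mul_assoc, div_mul_cancel₀ _ hap.ne']
      calc y * μ ≤ |y * μ| := le_abs_self _
        _ = |y| * |μ| := abs_mul y μ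
    have h3 : |y| * (-α * |y| + β) = -α * y ^ 2 + |y| * β := by
      linear_combination (-α) * abs_mul_abs_self y
    rw [h3]
    linarith [h2]
  have htend : Filter.Tendsto (fun y : ℝ => E υ a y p μ) (Filter.cocompact ℝ) Filter.atBot := by
    have hnorm : Filter.Tendsto (fun y : ℝ => |y|) (Filter.cocompact ℝ) Filter.atTop := by
      exact (tendsto_norm_cocompact_atTop (E := ℝ)).congr (fun y => Real.norm_eq_abs y)
    have hmul : Filter.Tendsto (fun t : ℝ => α * t) Filter.atTop Filter.atTop :=
      Filter.Tendsto.const_mul_atTop hα Filter.tendsto_id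
    have hinner : Filter.Tendsto (fun t : ℝ => -α * t + β) Filter.atTop Filter.atBot := by
      apply Filter.tendsto_atBot_add_const_right
      exact (Filter.tendsto_neg_atBot_iff.mpr hmul).congr (fun t => by ring)
    have hq : Filter.Tendsto (fun t : ℝ => t * (-α * t + β) + γ) Filter.atTop Filter.atBot :=
      Filter.tendsto_atBot_add_const_right _ γ
        (Filter.Tendsto.atTop_mul_atBot₀ Filter.tendsto_id hinner)
    exact Filter.tendsto_atBot_mono hbound (hq.comp hnorm)
  refine ⟨htend, hEcont.exists_forall_ge htend⟩
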